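/- Let X be a tree of spaces over a simplicial tree T with projection P : X → T, and let X̂ be the induced tree of coned-off spaces. If X̂ is hyperbolic, then the maximal cone-subtrees T_α are uniformly quasiconvex subsets of X̂; moreover, each geodesic edge-path in T_α is a geodesic in X̂. -/

import Mathlib

/-! ## Coarse-geometric preliminaries: hyperbolicity, quasigeodesics,
electric (coned-off) spaces and relative hyperbolicity, following Farb. -/

/-- Four-point (Gromov) hyperbolicity condition for an abstract distance function. -/
def GromovHyperbolicD {A : Type*} (d : A → A → ℝ) (δ : ℝ) : Prop :=
  ∀ x y z w : A, d x y + d z w ≤ max (d x z + d y w) (d x w + d y z) + 2 * δ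

structure IsPseudoMetric {A : Type*} (d : A → A → ℝ) : Prop where
  refl : ∀ a, d a a = 0
  nonneg : ∀ a b, 0 ≤ d a b
  symm : ∀ a b, d a b = d b a
  triangle : ∀ a b c, d a c ≤ d a b + d b c

/-- `γ` is a (unit-speed) geodesic on `[a,b]` w.r.t. the distance `d`. -/
def GeodesicPathD {A : Type*} (d : A → A → ℝ) (γ : ℝ → A) (a b : ℝ) : Prop :=
  ∀ s ∈ Set.Icc a b, ∀ t ∈ Set.Icc a b, d (γ s) (γ t) = |s - t|

/-- `γ` is a `(K,ε)`-quasigeodesic on `[a,b]` w.r.t. the distance `d`. -/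
def QuasiGeodesicD {A : Type*} (d : A → A → ℝ) (K ε : ℝ) (γ : ℝ → A) (a b : ℝ) : Prop :=
  ∀ s ∈ Set.Icc a b, ∀ t ∈ Set.Icc a b,
    (1/K) * |s - t| - ε ≤ d (γ s) (γ t) ∧ d (γ s) (γ t) ≤ K * |s - t| + ε

/-- `(A,d)` is a geodesic space: any two points are joined by a geodesic. -/
def GeodesicSpaceD {A : Type*} (d : A → A → ℝ) : Prop :=
  ∀ x y : A, ∃ γ : ℝ → A, γ 0 = x ∧ γ (d x y) = y ∧ GeodesicPathD d γ 0 (d x y)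

/-- `Y` is `C`-quasiconvex: geodesics between points of `Y` stay in its `C`-neighbourhood. -/
def QuasiconvexD {A : Type*} (d : A → A → ℝ) (C : ℝ) (Y : Set A) : Prop :=
  ∀ (γ : ℝ → A) (a b : ℝ), GeodesicPathD d γ a b → γ a ∈ Y → γ b ∈ Y →
    ∀ t ∈ Set.Icc a b, ∃ y ∈ Y, d (γ t) y ≤ C

/-- `π` is a nearest-point projection (retraction) of `A` onto `Y`. -/
def NearestProjD {A : Type*} (d : A → A → ℝ) (Y : Set A) (π : A → A) : Prop :=
  ∀ x, π x ∈ Y ∧ ∀ y ∈ Y, d x (π x) ≤ d x y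

/-- the family `H` is uniformly `D`-separated. -/
def SeparatedD {A : Type*} {ι : Type*} (d : A → A → ℝ) (H : ι → Set A) (D : ℝ) : Prop :=
  ∀ i j, i ≠ j → ∀ x ∈ H i, ∀ y ∈ H j, D ≤ d x y

/-- the family `H` is mutually `D`-cobounded: the nearest-point projection of any
member onto any other member has diameter at most `D`. -/
def CoboundedD {A : Type*} {ι : Type*} (d : A → A → ℝ) (H : ι → Set A) (D : ℝ) : Prop :=
  ∀ i j, i ≠ j → ∀ π : A → A, NearestProjD d (H i) π →
    ∀ x ∈ H j, ∀ y ∈ H j, d (π x) (π y) ≤ D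

/-- An electric (coned-off) space `X̂` for `(A, d)` with horosphere-like sets `H i`:
for each `i` a cone point (`Sum.inr i`) is added, joined to every point of `H i` by an
edge of length `1/2`; `ed` is the resulting electric path pseudometric on `A ⊕ ι`. -/
structure Electric (A : Type*) (d : A → A → ℝ) (ι : Type*) (H : ι → Set A) where
  ed : (A ⊕ ι) → (A ⊕ ι) → ℝ
  pseudo : IsPseudoMetric ed
  le_base : ∀ x y : A, ed (Sum.inl x) (Sum.inl y) ≤ d x y
  cone_half : ∀ i : ι, ∀ x ∈ H i, ed (Sum.inl x) (Sum.inr i) = 1/2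

/-- membership in the `ε`-neighbourhood `N_ε(H i)`, for points of the coned-off space. -/
def inNbhdD {A : Type*} {ι : Type*} (d : A → A → ℝ) (H : ι → Set A) (ε : ℝ) (i : ι) :
    A ⊕ ι → Prop
  | Sum.inl x => ∃ h ∈ H i, d x h ≤ ε
  | Sum.inr j => j = i

/-- an electric path does not backtrack: it never returns to `N_ε(H i)` after leaving it. -/
def NoBacktrackD {A : Type*} {ι : Type*} (d : A → A → ℝ) (H : ι → Set A)
    (γ : ℝ → A ⊕ ι) (a b ε : ℝ) : Prop :=
  ∀ i : ι, ∀ s ∈ Set.Icc a b, ∀ t ∈ Set.Icc a b, ∀ u ∈ Set.Icc a b,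
    s ≤ t → t ≤ u → inNbhdD d H ε i (γ s) → inNbhdD d H ε i (γ u) → inNbhdD d H ε i (γ t)

/-- `t` is the entry time of `γ` into `N_ε(H i)`. -/
def IsEntryTimeD {A : Type*} {ι : Type*} (d : A → A → ℝ) (H : ι → Set A) (ε : ℝ) (i : ι)
    (γ : ℝ → A ⊕ ι) (a b t : ℝ) : Prop :=
  t ∈ Set.Icc a b ∧ inNbhdD d H ε i (γ t) ∧
    ∀ s ∈ Set.Icc a b, inNbhdD d H ε i (γ s) → t ≤ s

/-- `t` is the exit time of `γ` from `N_ε(H i)`. -/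
def IsExitTimeD {A : Type*} {ι : Type*} (d : A → A → ℝ) (H : ι → Set A) (ε : ℝ) (i : ι)
    (γ : ℝ → A ⊕ ι) (a b t : ℝ) : Prop :=
  t ∈ Set.Icc a b ∧ inNbhdD d H ε i (γ t) ∧
    ∀ s ∈ Set.Icc a b, inNbhdD d H ε i (γ s) → s ≤ t

/-- a discrete path (a chain with steps of size at most 1) inside `S` from `x` to `y`
of total length at most `D`; a coarse rendering of "distance at most `D` in the
intrinsic path metric of `S`". -/
def ChainBoundD {A : Type*} (d : A → A → ℝ) (S : Set A) (x y : A) (D : ℝ) : Prop :=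
  ∃ (n : ℕ) (c : Fin (n+1) → A), c 0 = x ∧ c (Fin.last n) = y ∧ (∀ k, c k ∈ S) ∧
    (∀ k : Fin n, d (c k.castSucc) (c k.succ) ≤ 1) ∧
    (∑ k : Fin n, d (c k.castSucc) (c k.succ)) ≤ D

/-- the entry points of `β₁, β₂` into any common `N_ε(H i)` are at distance at most `D`
in the intrinsic path metric of `N_ε(H i)`. -/
def SimilarEntriesD {A : Type*} {ι : Type*} (d : A → A → ℝ) (H : ι → Set A) (ε D : ℝ)
    (β₁ : ℝ → A ⊕ ι) (a₁ b₁ : ℝ) (β₂ : ℝ → A ⊕ ι) (a₂ b₂ : ℝ) : Prop :=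
  ∀ i : ι, ∀ t₁ t₂ : ℝ, ∀ u₁ u₂ : A,
    IsEntryTimeD d H ε i β₁ a₁ b₁ t₁ → IsEntryTimeD d H ε i β₂ a₂ b₂ t₂ →
    β₁ t₁ = Sum.inl u₁ → β₂ t₂ = Sum.inl u₂ →
    ChainBoundD d {z | ∃ h ∈ H i, d z h ≤ ε} u₁ u₂ D

/-- same for exit points. -/
def SimilarExitsD {A : Type*} {ι : Type*} (d : A → A → ℝ) (H : ι → Set A) (ε D : ℝ)
    (β₁ : ℝ → A ⊕ ι) (a₁ b₁ : ℝ) (β₂ : ℝ → A ⊕ ι) (a₂ b₂ : ℝ) : Prop :=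
  ∀ i : ι, ∀ t₁ t₂ : ℝ, ∀ u₁ u₂ : A,
    IsExitTimeD d H ε i β₁ a₁ b₁ t₁ → IsExitTimeD d H ε i β₂ a₂ b₂ t₂ →
    β₁ t₁ = Sum.inl u₁ → β₂ t₂ = Sum.inl u₂ →
    ChainBoundD d {z | ∃ h ∈ H i, d z h ≤ ε} u₁ u₂ D

/-- Bounded penetration: electric quasigeodesics without backtracking with common
endpoints have similar intersection patterns with the horosphere-like sets. -/
def BoundedPenetrationD {A : Type*} {ι : Type*} (d : A → A → ℝ) (H : ι → Set A)
    (E : Electric A d ι H) : Prop :=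
  ∀ P ε : ℝ, 0 < P → 0 ≤ ε → ∃ D : ℝ,
    ∀ (β₁ β₂ : ℝ → A ⊕ ι) (a₁ b₁ a₂ b₂ : ℝ) (x y : A),
      QuasiGeodesicD E.ed P P β₁ a₁ b₁ → NoBacktrackD d H β₁ a₁ b₁ ε →
      QuasiGeodesicD E.ed P P β₂ a₂ b₂ → NoBacktrackD d H β₂ a₂ b₂ ε →
      β₁ a₁ = Sum.inl x → β₂ a₂ = Sum.inl x → β₁ b₁ = Sum.inl y → β₂ b₂ = Sum.inl y →
      SimilarEntriesD d H ε D β₁ a₁ b₁ β₂ a₂ b₂ ∧ SimilarExitsD d H ε D β₁ a₁ b₁ β₂ a₂ b₂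

/-- `(A,d)` is weakly hyperbolic relative to `H`: the coned-off space is hyperbolic. -/
def WeaklyRelHypD {A : Type*} {ι : Type*} (d : A → A → ℝ) (H : ι → Set A) : Prop :=
  ∃ E : Electric A d ι H, ∃ δ : ℝ, GromovHyperbolicD E.ed δ

/-- `(A,d)` is strongly hyperbolic relative to `H`: the coned-off space is hyperbolic
and bounded penetration holds. -/
def StronglyRelHypD {A : Type*} {ι : Type*} (d : A → A → ℝ) (H : ι → Set A) : Prop :=
  ∃ E : Electric A d ι H, (∃ δ : ℝ, GromovHyperbolicD E.ed δ) ∧ BoundedPenetrationD d H E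

/-! ## Trees of strongly relatively hyperbolic spaces (Bestvina–Feighn setup).
The structure bundles: a simplicial tree `T = (V, G)`; a total space `(X, d)`
projecting to `T`; vertex spaces (fibres of `P`) with their induced path metrics
`dv`, uniformly properly embedded, each strongly hyperbolic relative to its
horosphere-like sets (qi-embedded condition and condition (6) of the definition);
edge spaces with quasi-isometrically embedded edge-to-vertex maps (qi-embedded
condition); the strictly type-preserving condition; the induced tree of coned-off
spaces `X̂` (carrier `X ⊕ Λ`, metric `dhat`) and the qi-preserving electrocution
condition; and the cone locus with its adjacency, whose components give the
maximal cone-subtrees `T_α` and the maximal cone-subtrees of horosphere-like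
spaces `C_α`. -/
structure TreeOfRelHypSpaces where
  /-- vertices of the underlying simplicial tree -/
  V : Type
  G : SimpleGraph V
  htree : G.IsTree
  /-- total space -/
  X : Type
  d : X → X → ℝ
  d_pseudo : IsPseudoMetric d
  d_geodesic : GeodesicSpaceD d
  /-- projection to the tree -/
  P : X → V
  /-- induced path metric on the vertex space `X_v = P⁻¹ v` -/
  dv : V → X → X → ℝ
  dv_pseudo : ∀ v, IsPseudoMetric (dv v)
  d_le_dv : ∀ v x y, P x = v → P y = v → d x y ≤ dv v x y
  /-- vertex spaces are uniformly properly embedded -/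
  unif_proper : ∀ M : ℝ, ∃ N : ℝ, ∀ v x y, P x = v → P y = v → d x y ≤ M → dv v x y ≤ N
  /-- index set of horosphere-like sets of the vertex spaces -/
  Λ : Type
  hsv : Λ → V
  hs : Λ → Set X
  hs_sub : ∀ α, ∀ x ∈ hs α, P x = hsv α
  hs_separated : ∃ D > (0:ℝ), ∀ v : V,
    SeparatedD (dv v) (fun α : {α : Λ // hsv α = v} => hs α.1) D
  /-- each vertex space is strongly hyperbolic relative to its horosphere-like sets -/
  vertex_srh : ∀ v : V,
    StronglyRelHypD (fun x y : {x : X // P x = v} => dv v x.1 y.1)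
      (fun α : {α : Λ // hsv α = v} => {x : {x : X // P x = v} | x.1 ∈ hs α.1})
  /-- edge spaces, one for each oriented edge of the tree -/
  Xe : ∀ u v : V, G.Adj u v → Type
  de : ∀ (u v : V) (h : G.Adj u v), Xe u v h → Xe u v h → ℝ
  de_pseudo : ∀ u v h, IsPseudoMetric (de u v h)
  /-- edge-space-to-vertex-space map (into the fibre over `u`) -/
  fe : ∀ (u v : V) (h : G.Adj u v), Xe u v h → X
  fe_fiber : ∀ u v h p, P (fe u v h p) = u
  K : ℝ
  ε : ℝ
  hK : 1 ≤ K
  hε : 0 ≤ ε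
  /-- the qi-embedded condition -/
  qi_embed : ∀ (u v : V) (h : G.Adj u v) (p q : Xe u v h),
    (1/K) * de u v h p q - ε ≤ dv u (fe u v h p) (fe u v h q) ∧
      dv u (fe u v h p) (fe u v h q) ≤ K * de u v h p q + ε
  /-- horosphere-like sets of the edge spaces -/
  Λe : ∀ u v : V, G.Adj u v → Type
  hse : ∀ (u v : V) (h : G.Adj u v), Λe u v h → Set (Xe u v h)
  /-- the strictly type-preserving condition: the preimage of a horosphere-like
  vertex set under an edge-to-vertex map is empty or an edge horosphere-like set -/
  strictly_type_preserving : ∀ (u v : V) (h : G.Adj u v) (α : Λ), hsv α = u →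
    (fe u v h ⁻¹' hs α = (∅ : Set (Xe u v h)) ∨ ∃ β, fe u v h ⁻¹' hs α = hse u v h β)
  /-- the induced tree of coned-off spaces `X̂`: its carrier is `X ⊕ Λ`
  (cone points `Sum.inr α`, one over each horosphere-like set) with metric `dhat` -/
  dhat : (X ⊕ Λ) → (X ⊕ Λ) → ℝ
  dhat_pseudo : IsPseudoMetric dhat
  dhat_le : ∀ x y : X, dhat (Sum.inl x) (Sum.inl y) ≤ d x y
  dhat_cone : ∀ α, ∀ x ∈ hs α, dhat (Sum.inl x) (Sum.inr α) = 1/2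
  /-- the coned-off vertex spaces are uniformly hyperbolic -/
  conedoff_unif_hyp : ∃ δ : ℝ, ∀ v : V, ∀ p q r s : X ⊕ Λ,
    Sum.elim P hsv p = v → Sum.elim P hsv q = v → Sum.elim P hsv r = v →
    Sum.elim P hsv s = v →
    dhat p q + dhat r s ≤ max (dhat p r + dhat q s) (dhat p s + dhat q r) + 2 * δ
  /-- coned-off (electric) metrics on the edge spaces -/
  dehat : ∀ (u v : V) (h : G.Adj u v), Xe u v h → Xe u v h → ℝ
  dehat_pseudo : ∀ u v h, IsPseudoMetric (dehat u v h)
  /-- the qi-preserving electrocution condition: the induced maps of coned-off edge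
  spaces into coned-off vertex spaces are uniform quasi-isometric embeddings -/
  qi_electro : ∀ (u v : V) (h : G.Adj u v) (p q : Xe u v h),
    (1/K) * dehat u v h p q - ε ≤ dhat (Sum.inl (fe u v h p)) (Sum.inl (fe u v h q)) ∧
      dhat (Sum.inl (fe u v h p)) (Sum.inl (fe u v h q)) ≤ K * dehat u v h p q + ε
  /-- the cone locus: adjacency between cone points over an edge of the tree -/
  coneAdj : Λ → Λ → Prop
  coneAdj_adj : ∀ α β, coneAdj α β → G.Adj (hsv α) (hsv β)
  coneAdj_dist : ∀ α β, coneAdj α β → dhat (Sum.inr α) (Sum.inr β) ≤ 1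
  /-- the projection `P' : X̂ → T` is distance non-increasing -/
  proj_lip : ∀ p q : X ⊕ Λ,
    (G.dist (Sum.elim P hsv p) (Sum.elim P hsv q) : ℝ) ≤ dhat p q
  /-- `P'` restricted to each maximal cone-subtree is an isometry onto a subtree -/
  cone_tree_iso : ∀ α β : Λ,
    Relation.ReflTransGen (fun a b => coneAdj a b ∨ coneAdj b a) α β →
    dhat (Sum.inr α) (Sum.inr β) ≤ (G.dist (hsv α) (hsv β) : ℝ)

namespace TreeOfRelHypSpaces

variable (S : TreeOfRelHypSpaces)

/-- two cone points lie in the same component of the cone locus,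
i.e. in the same maximal cone-subtree. -/
def sameTree (α β : S.Λ) : Prop :=
  Relation.ReflTransGen (fun a b => S.coneAdj a b ∨ S.coneAdj b a) α β

/-- the maximal cone-subtree of horosphere-like spaces `C_α ⊆ X` through `α`. -/
def Cset (α : S.Λ) : Set S.X := {x | ∃ β, S.sameTree α β ∧ x ∈ S.hs β}

/-- the maximal cone-subtree `T_α ⊆ X̂` through `α` (as a subset of `X̂`). -/
def Tset (α : S.Λ) : Set (S.X ⊕ S.Λ) := {p | ∃ β, p = Sum.inr β ∧ S.sameTree α β}

/-- the projection `P' : X̂ → T`. -/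
def Phat : S.X ⊕ S.Λ → S.V := Sum.elim S.P S.hsv

/-- A hallway of length `2m` in the induced tree of coned-off spaces: a disk
`f : {-m,…,m} × I → X̂` (reindexed over `Fin (2m+1)`) whose slice `f i` is a
geodesic of length `len i` in the coned-off vertex space over `v i`. -/
structure Hallway (m : ℕ) where
  v : Fin (2*m+1) → S.V
  len : Fin (2*m+1) → ℝ
  len_nonneg : ∀ i, 0 ≤ len i
  f : Fin (2*m+1) → ℝ → S.X ⊕ S.Λ
  geod : ∀ i, ∀ s ∈ Set.Icc (0:ℝ) 1, ∀ t ∈ Set.Icc (0:ℝ) 1,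
    S.dhat (f i s) (f i t) = len i * |s - t|
  fiber : ∀ i, ∀ t ∈ Set.Icc (0:ℝ) 1, S.Phat (f i t) = v i

namespace Hallway

variable {S} {m : ℕ} (h : S.Hallway m)

/-- essential: the projected edge path in the tree does not backtrack
(hence is a geodesic segment in the tree). -/
def Essential : Prop :=
  (∀ i : Fin (2*m), S.G.Adj (h.v i.castSucc) (h.v i.succ)) ∧ Function.Injective h.v

/-- `ρ`-thin. -/
def Thin (ρ : ℝ) : Prop :=
  ∀ i : Fin (2*m), ∀ t ∈ Set.Icc (0:ℝ) 1,
    S.dhat (h.f i.castSucc t) (h.f i.succ t) ≤ ρ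

/-- `lam`-hyperbolic: the middle slice is `lam`-times shorter than one of the ends. -/
def Hyp (lam : ℝ) : Prop :=
  lam * h.len ⟨m, by omega⟩ ≤ max (h.len ⟨0, by omega⟩) (h.len ⟨2*m, by omega⟩)

/-- cone-bounded: the boundary of the hallway lies in the cone locus. -/
def ConeBounded : Prop :=
  ∀ i, (∃ α, h.f i 0 = Sum.inr α) ∧ (∃ α, h.f i 1 = Sum.inr α)

end Hallway

/-- the hallways flare condition of Bestvina–Feighn for the induced tree of
coned-off spaces. -/
def HallwaysFlare : Prop :=
  ∃ lam > (1:ℝ), ∃ m : ℕ, 1 ≤ m ∧ ∀ ρ : ℝ, ∃ Hc : ℝ, ∀ h : S.Hallway m,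
    h.Essential → h.Thin ρ → Hc ≤ h.len ⟨m, by omega⟩ → h.Hyp lam

/-- the cone-bounded hallways strictly flare condition. -/
def ConeBoundedFlare : Prop :=
  ∃ lam > (1:ℝ), ∃ m : ℕ, 1 ≤ m ∧ ∀ h : S.Hallway m,
    h.Essential → h.ConeBounded → h.Hyp lam

end TreeOfRelHypSpaces


section Aux

open SimpleGraph

private lemma dist_add_of_mem_support {V : Type} {G : SimpleGraph V} (hconn : G.Connected)
    {x y w : V} (p : G.Walk x y) (hp : p.length = G.dist x y) (hw : w ∈ p.support) :
    G.dist x w + G.dist w y = G.dist x y := by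
  classical
  have h1 : G.dist x w ≤ (p.takeUntil w hw).length := SimpleGraph.dist_le _
  have h2 : G.dist w y ≤ (p.dropUntil w hw).length := SimpleGraph.dist_le _
  have h3 : (p.takeUntil w hw).length + (p.dropUntil w hw).length = p.length := by
    have := congrArg Walk.length (p.take_spec hw)
    rwa [Walk.length_append] at this
  have h4 := hconn.dist_triangle (u := x) (v := w) (w := y)
  omega

private lemma tree_step {V : Type} {G : SimpleGraph V} (ht : G.IsTree)
    {x x' y w : V} (hadj : G.Adj x x') (hne : w ≠ x)
    (hw : G.dist x w + G.dist w y = G.dist x y) :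
    G.dist x' w + G.dist w y = G.dist x' y := by
  classical
  have hconn := ht.isConnected
  obtain ⟨A, hA⟩ := hconn.exists_walk_length_eq_dist x w
  obtain ⟨B, hB⟩ := hconn.exists_walk_length_eq_dist w y
  set p := A.append B with hpdef
  have hp : p.length = G.dist x y := by rw [hpdef, Walk.length_append, hA, hB, hw]
  have hwp : w ∈ p.support := by
    rw [hpdef, Walk.mem_support_append_iff]; exact Or.inl A.end_mem_support
  have hd1 : G.dist x x' = 1 := SimpleGraph.dist_eq_one_iff_adj.2 hadj
  by_cases hx' : x' ∈ p.support
  · have key := dist_add_of_mem_support hconn p hp hx'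
    have h1 : G.dist x x' ≤ (p.takeUntil x' hx').length := SimpleGraph.dist_le _
    have h2 : G.dist x' y ≤ (p.dropUntil x' hx').length := SimpleGraph.dist_le _
    have h3 : (p.takeUntil x' hx').length + (p.dropUntil x' hx').length = p.length := by
      have := congrArg Walk.length (p.take_spec hx')
      rwa [Walk.length_append] at this
    rw [hp] at h3
    have hLd : (p.dropUntil x' hx').length = G.dist x' y := by omega
    have hLt : (p.takeUntil x' hx').length = G.dist x x' := by omega
    have hwloc : w ∈ (p.takeUntil x' hx').support ∨ w ∈ (p.dropUntil x' hx').support := by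
      conv at hwp => rw [← p.take_spec hx']
      rw [Walk.mem_support_append_iff] at hwp
      exact hwp
    rcases hwloc with h | h
    · have h5 := dist_add_of_mem_support hconn _ hLt h
      have hxw : G.dist x w ≠ 0 :=
        fun hh => hne ((hconn.dist_eq_zero_iff).1 hh).symm
      have hwx' : G.dist w x' = 0 := by omega
      have hwe : w = x' := (hconn.dist_eq_zero_iff).1 hwx'
      subst hwe
      simp [SimpleGraph.dist_self]
    · exact dist_add_of_mem_support hconn _ hLd h
  · have hpath : p.IsPath := p.isPath_of_length_eq_dist hp
    have hq : (Walk.cons hadj.symm p).IsPath := hpath.cons hx'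
    obtain ⟨r, hr, hrl⟩ := hconn.exists_path_of_dist x' y
    obtain ⟨u, _, huu⟩ := ht.existsUnique_path x' y
    have e1 := huu _ hq
    have e2 := huu _ hr
    have hlen : (Walk.cons hadj.symm p).length = G.dist x' y := by
      rw [e1, ← e2]; exact hrl
    have hwq : w ∈ (Walk.cons hadj.symm p).support := by
      rw [Walk.support_cons]; exact List.mem_cons_of_mem _ hwp
    exact dist_add_of_mem_support hconn _ hlen hwq

private lemma sameTree_symm (S : TreeOfRelHypSpaces) {α β : S.Λ} (h : S.sameTree α β) :
    S.sameTree β α := by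
  have hsymm : Symmetric (fun a b => S.coneAdj a b ∨ S.coneAdj b a) :=
    fun a b h => h.symm
  exact (@Relation.ReflTransGen.symmetric _ _ ⟨fun a b h => hsymm h⟩).symm _ _ h

private lemma dhat_eq_dist (S : TreeOfRelHypSpaces) {β γ : S.Λ} (h : S.sameTree β γ) :
    S.dhat (Sum.inr β) (Sum.inr γ) = (S.G.dist (S.hsv β) (S.hsv γ) : ℝ) :=
  le_antisymm (S.cone_tree_iso β γ h) (S.proj_lip (Sum.inr β) (Sum.inr γ))

private lemma exists_mid (S : TreeOfRelHypSpaces) {β γ : S.Λ} (h : S.sameTree β γ) :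
    ∀ w, S.G.dist (S.hsv β) w + S.G.dist w (S.hsv γ) = S.G.dist (S.hsv β) (S.hsv γ) →
    ∃ δ, S.sameTree β δ ∧ S.hsv δ = w := by
  have hconn := S.htree.isConnected
  induction h using Relation.ReflTransGen.head_induction_on with
  | refl =>
    intro w hw
    rw [SimpleGraph.dist_self] at hw
    have h0 : S.G.dist (S.hsv γ) w = 0 := by omega
    exact ⟨γ, Relation.ReflTransGen.refl, (hconn.dist_eq_zero_iff).1 h0⟩
  | head hab hbc ih =>
    rename_i a c
    intro w hw
    by_cases hwa : w = S.hsv a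
    · exact ⟨a, Relation.ReflTransGen.refl, hwa.symm⟩
    · have hadj : S.G.Adj (S.hsv a) (S.hsv c) := by
        rcases hab with h' | h'
        · exact S.coneAdj_adj _ _ h'
        · exact (S.coneAdj_adj _ _ h').symm
      have hstep := tree_step S.htree hadj hwa hw
      obtain ⟨δ, hδ1, hδ2⟩ := ih w hstep
      exact ⟨δ, Relation.ReflTransGen.head hab hδ1, hδ2⟩

end Aux

/-- **Lemma 3.8.** Let `X` be a tree of spaces over a simplicial tree `T` and
`X̂` the induced tree of coned-off spaces (with projection `P' = Phat`).
If `X̂` is hyperbolic, then the maximal cone-subtrees `T_α` are uniformly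
quasiconvex in `X̂`; moreover each `T_α` is isometrically embedded via the tree
metric — `dhat p q = d_T(P' p, P' q)` for `p, q ∈ T_α` — so geodesic edge-paths
in `T_α` are geodesics of `X̂`. -/
theorem cone_subtrees_quasiconvex (S : TreeOfRelHypSpaces) (Δ : ℝ)
    (hhyp : GromovHyperbolicD S.dhat Δ) :
    (∃ C : ℝ, ∀ α : S.Λ, QuasiconvexD S.dhat C (S.Tset α)) ∧
    (∀ α : S.Λ, ∀ p ∈ S.Tset α, ∀ q ∈ S.Tset α,
      S.dhat p q = (S.G.dist (S.Phat p) (S.Phat q) : ℝ)) := by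
  have hconn := S.htree.isConnected
  have part2 : ∀ α : S.Λ, ∀ p ∈ S.Tset α, ∀ q ∈ S.Tset α,
      S.dhat p q = (S.G.dist (S.Phat p) (S.Phat q) : ℝ) := by
    rintro α p ⟨β, rfl, hβ⟩ q ⟨γ, rfl, hγ⟩
    exact dhat_eq_dist S ((sameTree_symm S hβ).trans hγ)
  refine ⟨⟨2 * Δ, ?_⟩, part2⟩
  intro α γp a b hgeo hpa hpb t ht
  obtain ⟨β₀, hpa_eq, hβ₀⟩ := hpa
  obtain ⟨γ₀, hpb_eq, hγ₀⟩ := hpb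
  have hab : a ≤ b := le_trans ht.1 ht.2
  have hβγ : S.sameTree β₀ γ₀ := (sameTree_symm S hβ₀).trans hγ₀
  have hDab : S.dhat (γp a) (γp b) = b - a := by
    rw [hgeo a ⟨le_refl a, hab⟩ b ⟨hab, le_refl b⟩, abs_sub_comm,
      abs_of_nonneg (sub_nonneg.2 hab)]
  have hN : (S.G.dist (S.hsv β₀) (S.hsv γ₀) : ℝ) = b - a := by
    rw [← dhat_eq_dist S hβγ, ← hpa_eq, ← hpb_eq, hDab]
  set w : S.V := Sum.elim S.P S.hsv (γp t) with hwdef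
  have h1 : (S.G.dist (S.hsv β₀) w : ℝ) ≤ t - a := by
    have hpl := S.proj_lip (γp a) (γp t)
    rw [hpa_eq] at hpl
    simp only [Sum.elim_inr] at hpl
    calc (S.G.dist (S.hsv β₀) w : ℝ) ≤ S.dhat (Sum.inr β₀) (γp t) := hpl
      _ = t - a := by
          rw [← hpa_eq, hgeo a ⟨le_refl a, hab⟩ t ht, abs_sub_comm,
            abs_of_nonneg (sub_nonneg.2 ht.1)]
  have h2 : (S.G.dist w (S.hsv γ₀) : ℝ) ≤ b - t := by
    have hpl := S.proj_lip (γp t) (γp b)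
    rw [hpb_eq] at hpl
    simp only [Sum.elim_inr] at hpl
    calc (S.G.dist w (S.hsv γ₀) : ℝ) ≤ S.dhat (γp t) (Sum.inr γ₀) := hpl
      _ = b - t := by
          rw [← hpb_eq, hgeo t ht b ⟨hab, le_refl b⟩, abs_sub_comm,
            abs_of_nonneg (sub_nonneg.2 ht.2)]
  have htri : S.G.dist (S.hsv β₀) (S.hsv γ₀) ≤
      S.G.dist (S.hsv β₀) w + S.G.dist w (S.hsv γ₀) := hconn.dist_triangle
  have hsum : S.G.dist (S.hsv β₀) w + S.G.dist w (S.hsv γ₀)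
      = S.G.dist (S.hsv β₀) (S.hsv γ₀) := by
    have hc : ((S.G.dist (S.hsv β₀) w + S.G.dist w (S.hsv γ₀) : ℕ) : ℝ) ≤
        ((S.G.dist (S.hsv β₀) (S.hsv γ₀) : ℕ) : ℝ) := by push_cast; linarith
    have := Nat.cast_le.mp hc
    omega
  obtain ⟨δ, hδ1, hδ2⟩ := exists_mid S hβγ w hsum
  have hcast : (S.G.dist (S.hsv β₀) w : ℝ) + (S.G.dist w (S.hsv γ₀) : ℝ)
      = (S.G.dist (S.hsv β₀) (S.hsv γ₀) : ℝ) := by exact_mod_cast congrArg (Nat.cast (R := ℝ)) hsum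
  have hk1 : (S.G.dist (S.hsv β₀) w : ℝ) = t - a := by linarith
  have hk2 : (S.G.dist w (S.hsv γ₀) : ℝ) = b - t := by linarith
  have hd1 : S.dhat (Sum.inr β₀) (Sum.inr δ) = t - a := by
    rw [dhat_eq_dist S hδ1, hδ2, hk1]
  have hd2 : S.dhat (Sum.inr δ) (Sum.inr γ₀) = b - t := by
    rw [dhat_eq_dist S ((sameTree_symm S hδ1).trans hβγ), hδ2, hk2]
  have hyp := hhyp (γp t) (Sum.inr δ) (γp a) (γp b)
  have dta : S.dhat (γp t) (γp a) = t - a := by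
    rw [hgeo t ht a ⟨le_refl a, hab⟩, abs_of_nonneg (sub_nonneg.2 ht.1)]
  have dtb : S.dhat (γp t) (γp b) = b - t := by
    rw [hgeo t ht b ⟨hab, le_refl b⟩, abs_sub_comm, abs_of_nonneg (sub_nonneg.2 ht.2)]
  have dδb : S.dhat (Sum.inr δ) (γp b) = b - t := by rw [hpb_eq]; exact hd2
  have dδa : S.dhat (Sum.inr δ) (γp a) = t - a := by
    rw [hpa_eq, S.dhat_pseudo.symm]; exact hd1
  rw [hDab, dta, dtb, dδa, dδb] at hyp
  have hm1 : t - a + (b - t) = b - a := by ring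
  have hm2 : b - t + (t - a) = b - a := by ring
  rw [hm1, hm2, max_self] at hyp
  refine ⟨Sum.inr δ, ⟨δ, rfl, hβ₀.trans hδ1⟩, by linarith⟩
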